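/- arXiv:2010.10756 — 3 statements merged into one kernel-verified Lean document; each statement's English description precedes it below -/
import Mathlib

section
/- Let s₁ and s₂ be positive integers and let x and a be nonnegative integers with a ≤ s₂. Then there exists an s₁ × s₂ matrix T with integer entries such that every row of T has exactly a entries equal to x+1 and exactly s₂ − a entries equal to x, and the sums of any two columns of T differ by at most 1. -/
namespace BalancedAux

variable (s₁ s₂ a : ℕ)

/-- breakpoints -/
def c (j : ℕ) : ℕ := j * (s₁ * a) / s₂

/-- number of marks in cell (i,j): 0 or 1 -/
def cnt (i j : ℕ) : ℕ :=
  ((Finset.Ico (c s₁ s₂ a j) (c s₁ s₂ a (j + 1))).filter fun m => m % s₁ = i).card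

lemma c_low (hs₂ : 0 < s₂) (j : ℕ) :
    c s₁ s₂ a j + s₁ * a / s₂ ≤ c s₁ s₂ a (j + 1) := by
  unfold c
  rw [Nat.succ_mul, Nat.add_div hs₂]
  split <;> omega

lemma c_high (hs₂ : 0 < s₂) (j : ℕ) :
    c s₁ s₂ a (j + 1) ≤ c s₁ s₂ a j + s₁ * a / s₂ + 1 := by
  unfold c
  rw [Nat.succ_mul, Nat.add_div hs₂]
  split <;> omega

lemma c_mono (hs₂ : 0 < s₂) (j : ℕ) : c s₁ s₂ a j ≤ c s₁ s₂ a (j + 1) := by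
  exact Nat.div_le_div_right (Nat.mul_le_mul_right _ (Nat.le_succ _))

lemma c_len (hs₂ : 0 < s₂) (ha : a ≤ s₂) (j : ℕ) :
    c s₁ s₂ a (j + 1) ≤ c s₁ s₂ a j + s₁ := by
  unfold c
  calc (j + 1) * (s₁ * a) / s₂ = (j * (s₁ * a) + s₁ * a) / s₂ := by rw [Nat.succ_mul]
    _ ≤ (j * (s₁ * a) + s₁ * s₂) / s₂ :=
        Nat.div_le_div_right (by gcongr)
    _ = j * (s₁ * a) / s₂ + s₁ := Nat.add_mul_div_right _ _ hs₂

lemma cnt_le_one (hs₁ : 0 < s₁) (hs₂ : 0 < s₂) (ha : a ≤ s₂) (i j : ℕ) :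
    cnt s₁ s₂ a i j ≤ 1 := by
  have hlen := c_len s₁ s₂ a hs₂ ha j
  apply Finset.card_le_one.mpr
  intro m1 h1 m2 h2
  simp only [Finset.mem_filter, Finset.mem_Ico] at h1 h2
  have key : ∀ p q : ℕ, p ≤ q → c s₁ s₂ a j ≤ p → q < c s₁ s₂ a (j + 1) →
      p % s₁ = q % s₁ → p = q := by
    intro p q hpq hp hq hm
    have hd : (q - p) % s₁ = 0 := Nat.sub_mod_eq_zero_of_mod_eq hm.symm
    have hlt : q - p < s₁ := by omega
    have := Nat.eq_zero_of_dvd_of_lt (Nat.dvd_of_mod_eq_zero hd)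
    omega
  rcases le_total m1 m2 with h | h
  · exact key m1 m2 h h1.1.1 h2.1.2 (h1.2.trans h2.2.symm)
  · exact (key m2 m1 h h2.1.1 h1.1.2 (h2.2.trans h1.2.symm)).symm

lemma card_row (hs₁ : 0 < s₁) {i : ℕ} (hi : i < s₁) :
    ((Finset.Ico 0 (s₁ * a)).filter fun m => m % s₁ = i).card = a := by
  have : ((Finset.Ico 0 (s₁ * a)).filter fun m => m % s₁ = i)
      = (Finset.range a).image fun t => t * s₁ + i := by
    ext m
    simp only [Finset.mem_filter, Finset.mem_Ico, Finset.mem_image, Finset.mem_range]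
    constructor
    · rintro ⟨⟨-, hm⟩, hmod⟩
      refine ⟨m / s₁, ?_, ?_⟩
      · exact (Nat.div_lt_iff_lt_mul hs₁).mpr (by rwa [mul_comm])
      · rw [← hmod, Nat.div_add_mod']
    · rintro ⟨t, ht, rfl⟩
      constructor
      · constructor
        · omega
        · calc t * s₁ + i < (t + 1) * s₁ := by rw [Nat.succ_mul]; omega
            _ ≤ a * s₁ := by gcongr; omega
            _ = s₁ * a := mul_comm _ _
      · rw [add_comm, Nat.add_mul_mod_self_right, Nat.mod_eq_of_lt hi]
  rw [this, Finset.card_image_of_injective _ (fun t1 t2 h =>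
    Nat.eq_of_mul_eq_mul_right hs₁ (Nat.add_right_cancel h)), Finset.card_range]

lemma sum_cnt_row (hs₂ : 0 < s₂) (i : ℕ) (n : ℕ) :
    ∑ j ∈ Finset.range n, cnt s₁ s₂ a i j
      = ((Finset.Ico 0 (c s₁ s₂ a n)).filter fun m => m % s₁ = i).card := by
  induction n with
  | zero => simp [c]
  | succ n ih =>
    rw [Finset.sum_range_succ, ih]
    have h1 : Finset.Ico 0 (c s₁ s₂ a (n + 1))
        = Finset.Ico 0 (c s₁ s₂ a n) ∪ Finset.Ico (c s₁ s₂ a n) (c s₁ s₂ a (n + 1)) := by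
      rw [Finset.Ico_union_Ico_eq_Ico (Nat.zero_le _) (c_mono s₁ s₂ a hs₂ n)]
    rw [h1, Finset.filter_union, Finset.card_union_of_disjoint
      (Finset.disjoint_filter_filter (Finset.Ico_disjoint_Ico_consecutive _ _ _))]
    rfl

lemma sum_cnt_col (hs₁ : 0 < s₁) (j : ℕ) :
    ∑ i : Fin s₁, cnt s₁ s₂ a (i : ℕ) j
      = c s₁ s₂ a (j + 1) - c s₁ s₂ a j := by
  have := Finset.card_eq_sum_card_fiberwise
    (f := fun m => (⟨m % s₁, Nat.mod_lt _ hs₁⟩ : Fin s₁))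
    (s := Finset.Ico (c s₁ s₂ a j) (c s₁ s₂ a (j + 1))) (t := Finset.univ)
    (fun x _ => Finset.mem_univ _)
  rw [Nat.card_Ico] at this
  rw [this]
  apply Finset.sum_congr rfl
  intro i _
  unfold cnt
  congr 1
  apply Finset.filter_congr
  intro m _
  simp [Fin.ext_iff]

end BalancedAux

/-- Lemma 5: there is an `s₁ × s₂` integer matrix whose every row has exactly `a`
entries equal to `x + 1` and exactly `s₂ - a` entries equal to `x`, and whose column
sums pairwise differ by at most `1`. -/
theorem balanced_matrix_exists (s₁ s₂ : ℕ) (hs₁ : 0 < s₁) (hs₂ : 0 < s₂)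
    (x a : ℕ) (ha : a ≤ s₂) :
    ∃ T : Fin s₁ → Fin s₂ → ℤ,
      (∀ i : Fin s₁,
        (Finset.univ.filter fun j : Fin s₂ => T i j = (x : ℤ) + 1).card = a ∧
        (Finset.univ.filter fun j : Fin s₂ => T i j = (x : ℤ)).card = s₂ - a) ∧
      ∀ j₁ j₂ : Fin s₂, |(∑ i : Fin s₁, T i j₁) - ∑ i : Fin s₁, T i j₂| ≤ 1 := by
  classical
  have hle : ∀ (i : ℕ) (j : ℕ), BalancedAux.cnt s₁ s₂ a i j ≤ 1 :=
    fun i j => BalancedAux.cnt_le_one s₁ s₂ a hs₁ hs₂ ha i j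
  have hkey : ∀ i : Fin s₁,
      (Finset.univ.filter fun j : Fin s₂ =>
        BalancedAux.cnt s₁ s₂ a (i : ℕ) (j : ℕ) = 1).card = a := by
    intro i
    rw [Finset.card_filter]
    have h2 : ∀ j : Fin s₂,
        (if BalancedAux.cnt s₁ s₂ a (i : ℕ) (j : ℕ) = 1 then 1 else 0)
          = BalancedAux.cnt s₁ s₂ a (i : ℕ) (j : ℕ) := by
      intro j
      have := hle (i : ℕ) (j : ℕ)
      split <;> omega
    rw [Finset.sum_congr rfl fun j _ => h2 j]
    rw [Fin.sum_univ_eq_sum_range (fun j => BalancedAux.cnt s₁ s₂ a (i : ℕ) j) s₂]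
    rw [BalancedAux.sum_cnt_row s₁ s₂ a hs₂ (i : ℕ) s₂]
    have hcend : BalancedAux.c s₁ s₂ a s₂ = s₁ * a := by
      unfold BalancedAux.c
      exact Nat.mul_div_cancel_left _ hs₂
    rw [hcend]
    exact BalancedAux.card_row s₁ a hs₁ i.isLt
  have hcol : ∀ j : Fin s₂, (∑ i : Fin s₁,
        ((x : ℤ) + BalancedAux.cnt s₁ s₂ a (i : ℕ) (j : ℕ)))
      = (s₁ : ℤ) * x +
        ((BalancedAux.c s₁ s₂ a ((j : ℕ) + 1) - BalancedAux.c s₁ s₂ a (j : ℕ) : ℕ) : ℤ) := by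
    intro j
    rw [Finset.sum_add_distrib, Finset.sum_const, Finset.card_univ, Fintype.card_fin,
      ← Nat.cast_sum, BalancedAux.sum_cnt_col s₁ s₂ a hs₁ (j : ℕ)]
    push_cast
    ring
  refine ⟨fun i j => (x : ℤ) + BalancedAux.cnt s₁ s₂ a (i : ℕ) (j : ℕ), fun i => ⟨?_, ?_⟩, ?_⟩
  · have h1 : (Finset.univ.filter fun j : Fin s₂ =>
          (x : ℤ) + BalancedAux.cnt s₁ s₂ a (i : ℕ) (j : ℕ) = (x : ℤ) + 1)
        = Finset.univ.filter fun j : Fin s₂ =>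
            BalancedAux.cnt s₁ s₂ a (i : ℕ) (j : ℕ) = 1 := by
      apply Finset.filter_congr
      intro j _
      omega
    rw [h1, hkey i]
  · have h1 : (Finset.univ.filter fun j : Fin s₂ =>
          (x : ℤ) + BalancedAux.cnt s₁ s₂ a (i : ℕ) (j : ℕ) = (x : ℤ))
        = Finset.univ.filter fun j : Fin s₂ =>
            ¬ BalancedAux.cnt s₁ s₂ a (i : ℕ) (j : ℕ) = 1 := by
      apply Finset.filter_congr
      intro j _
      have := hle (i : ℕ) (j : ℕ)
      omega
    rw [h1]
    have h3 := Finset.card_filter_add_card_filter_not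
      (s := (Finset.univ : Finset (Fin s₂)))
      (p := fun j : Fin s₂ => BalancedAux.cnt s₁ s₂ a (i : ℕ) (j : ℕ) = 1)
    rw [hkey i, Finset.card_univ, Fintype.card_fin] at h3
    omega
  · intro j₁ j₂
    rw [hcol j₁, hcol j₂]
    set n₁ := BalancedAux.c s₁ s₂ a ((j₁ : ℕ) + 1) - BalancedAux.c s₁ s₂ a (j₁ : ℕ) with hn₁
    set n₂ := BalancedAux.c s₁ s₂ a ((j₂ : ℕ) + 1) - BalancedAux.c s₁ s₂ a (j₂ : ℕ) with hn₂
    have hb : ∀ j : ℕ, s₁ * a / s₂ ≤ BalancedAux.c s₁ s₂ a (j + 1) - BalancedAux.c s₁ s₂ a j ∧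
        BalancedAux.c s₁ s₂ a (j + 1) - BalancedAux.c s₁ s₂ a j ≤ s₁ * a / s₂ + 1 := by
      intro j
      have h1 := BalancedAux.c_low s₁ s₂ a hs₂ j
      have h2 := BalancedAux.c_high s₁ s₂ a hs₂ j
      generalize s₁ * a / s₂ = q at h1 h2 ⊢
      omega
    have hb₁ := hb (j₁ : ℕ)
    have hb₂ := hb (j₂ : ℕ)
    have heq : (s₁ : ℤ) * x + (n₁ : ℤ) - ((s₁ : ℤ) * x + (n₂ : ℤ)) = (n₁ : ℤ) - n₂ := by ring
    rw [heq, abs_le]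
    constructor <;> omega
end

section
/- Let k ≥ 4 and r be integers such that 1 ≤ r ≤ (1/3)·√(2k), and let t = ⌈q⌉ where q is the unique real number with q ≥ 2 and q(q−1)/2 = 3r (explicitly, q = (1 + √(1 + 24r))/2). Then SP(2k + r, k) ≤ 2k + 4r − t − 1. -/
/-- An `(n,k)`-Sperner partition system: a set of partitions of `Fin n`, each with `k`
nonempty parts, such that no part of a partition is a subset of a part of a different
partition of the system. -/
def IsSpernerPartitionSystem (n k : ℕ) (P : Finset (Finset (Finset (Fin n)))) : Prop :=
  (∀ Q ∈ P, Q.card = k ∧ ∅ ∉ Q ∧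
    (Q : Set (Finset (Fin n))).PairwiseDisjoint id ∧ Q.sup id = Finset.univ) ∧
  ∀ Q₁ ∈ P, ∀ Q₂ ∈ P, Q₁ ≠ Q₂ → ∀ A ∈ Q₁, ∀ B ∈ Q₂, ¬ A ⊆ B

/-- `SP n k` is the maximum number of partitions in an `(n,k)`-Sperner partition system. -/
noncomputable def SP (n k : ℕ) : ℕ :=
  sSup {m | ∃ P : Finset (Finset (Finset (Fin n))),
    IsSpernerPartitionSystem n k P ∧ P.card = m}


section SpernerAux

open Finset

lemma two_mul_choose_two (m : ℕ) : 2 * m.choose 2 + m = m * m := by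
  induction m with
  | zero => rfl
  | succ m ih =>
    have h : (m + 1).choose 2 = m.choose 1 + m.choose 2 := Nat.choose_succ_succ m 1
    have h2 : (m + 1) * (m + 1) = m * m + 2 * m + 1 := by ring
    rw [h, Nat.choose_one_right, h2]
    omega

noncomputable def partOf {n : ℕ} (Q : Finset (Finset (Fin n))) (x : Fin n) :
    Finset (Fin n) :=
  if h : ∃ A ∈ Q, x ∈ A then h.choose else ∅

lemma partOf_spec {n : ℕ} {Q : Finset (Finset (Fin n))} {x : Fin n}
    (h : ∃ A ∈ Q, x ∈ A) : partOf Q x ∈ Q ∧ x ∈ partOf Q x := by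
  rw [partOf, dif_pos h]
  exact ⟨h.choose_spec.1, h.choose_spec.2⟩

lemma partOf_eq {n : ℕ} {Q : Finset (Finset (Fin n))} {x : Fin n}
    (hdisj : (Q : Set (Finset (Fin n))).PairwiseDisjoint id)
    {A : Finset (Fin n)} (hA : A ∈ Q) (hx : x ∈ A) : partOf Q x = A := by
  have h : ∃ A ∈ Q, x ∈ A := ⟨A, hA, hx⟩
  obtain ⟨hm, hxm⟩ := partOf_spec h
  by_contra hne
  have := hdisj hm hA hne
  exact absurd (this.le_bot (by simp [hxm, hx] : x ∈ partOf Q x ⊓ A)) (by simp)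

lemma sum_partOf {n : ℕ} {Q : Finset (Finset (Fin n))}
    (hdisj : (Q : Set (Finset (Fin n))).PairwiseDisjoint id)
    (hcov : Q.sup id = Finset.univ) (g : Finset (Fin n) → ℕ) :
    ∑ x : Fin n, g (partOf Q x) = ∑ A ∈ Q, A.card * g A := by
  have huniv : (Finset.univ : Finset (Fin n)) = Q.biUnion id := by
    rw [← hcov, sup_eq_biUnion]
  rw [huniv, Finset.sum_biUnion]
  · refine Finset.sum_congr rfl fun A hA => ?_
    rw [Finset.sum_congr rfl fun x hx => by rw [partOf_eq hdisj hA hx]]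
    simp [mul_comm]
  · exact hdisj

lemma keyArith (r t δ τ f : ℕ) (ht3 : 3 ≤ t) (htr : t ≤ 3*r)
    (h6 : t*t + 4 ≤ 6*r + 3*t)
    (hb : τ + f + t = δ + 1 + 3*r)
    (h2 : 2*τ + δ ≤ δ*δ)
    (h2' : 1 ≤ f → 2*τ + 6 + δ ≤ δ*δ ∧ 3 ≤ δ) :
    2*t ≤ 2*δ + f := by
  by_contra hcon
  push_neg at hcon
  have hδt : δ + 1 ≤ t := by omega
  rcases Nat.eq_zero_or_pos f with hf | hf
  · subst hf
    rcases le_or_gt δ 2 with hδ2 | hδ2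
    · interval_cases δ <;> omega
    · zify at *
      nlinarith [mul_nonneg (by linarith : (0:ℤ) ≤ (t:ℤ) - 1 - δ) (by linarith : (0:ℤ) ≤ (δ:ℤ) - 2),
        mul_nonneg (by linarith : (0:ℤ) ≤ (t:ℤ) - 2) (by linarith : (0:ℤ) ≤ (t:ℤ) - 1 - δ)]
  · obtain ⟨h2a, hδ3⟩ := h2' hf
    rcases le_or_gt t 4 with ht4 | ht4
    · have : δ = 3 := by omega
      subst this
      omega
    · zify at *
      nlinarith [mul_nonneg (by linarith : (0:ℤ) ≤ (t:ℤ) - 1 - δ) (by linarith : (0:ℤ) ≤ (δ:ℤ) - 3),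
        mul_nonneg (by linarith : (0:ℤ) ≤ (t:ℤ) - 5) (by linarith : (0:ℤ) ≤ (t:ℤ) - 1 - δ)]

-- basic facts in context of a Sperner system
section Core

variable {n k : ℕ} {P : Finset (Finset (Finset (Fin n)))}
  (hP : IsSpernerPartitionSystem n k P)

include hP

lemma part_mem {Q : Finset (Finset (Fin n))} (hQ : Q ∈ P) (x : Fin n) :
    partOf Q x ∈ Q ∧ x ∈ partOf Q x := by
  apply partOf_spec
  have hcov := (hP.1 Q hQ).2.2.2
  have : x ∈ Q.sup id := by rw [hcov]; exact mem_univ x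
  simpa using (Finset.mem_sup.mp this)

lemma part_eq {Q : Finset (Finset (Fin n))} (hQ : Q ∈ P) {A : Finset (Fin n)}
    (hA : A ∈ Q) {x : Fin n} (hx : x ∈ A) : partOf Q x = A :=
  partOf_eq (hP.1 Q hQ).2.2.1 hA hx

lemma part_card_two (hd : 2 ≤ P.card) {Q : Finset (Finset (Fin n))} (hQ : Q ∈ P)
    (x : Fin n) : 2 ≤ (partOf Q x).card := by
  obtain ⟨hAQ, hxA⟩ := part_mem hP hQ x
  by_contra hlt
  push_neg at hlt
  have hc1 : (partOf Q x).card = 1 := by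
    have : 1 ≤ (partOf Q x).card := Finset.card_pos.mpr ⟨x, hxA⟩
    omega
  have hsing : partOf Q x = {x} := by
    obtain ⟨a, ha⟩ := Finset.card_eq_one.mp hc1
    rw [ha] at hxA ⊢
    simp_all
  obtain ⟨Q', hQ', hne⟩ := Finset.exists_mem_ne (show 1 < P.card by omega) Q
  obtain ⟨hBQ', hxB⟩ := part_mem hP hQ' x
  exact hP.2 Q hQ Q' hQ' (Ne.symm hne) (partOf Q x) hAQ (partOf Q' x) hBQ'
    (by rw [hsing]; simpa using hxB)

lemma part_not_subset {Q Q' : Finset (Finset (Fin n))} (hQ : Q ∈ P) (hQ' : Q' ∈ P)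
    (hne : Q ≠ Q') (x y : Fin n) : ¬ partOf Q x ⊆ partOf Q' y :=
  hP.2 Q hQ Q' hQ' hne _ (part_mem hP hQ x).1 _ (part_mem hP hQ' y).1


end Core

lemma core {n k : ℕ} {P : Finset (Finset (Finset (Fin n)))}
    (hP : IsSpernerPartitionSystem n k P) (r t : ℕ) (hn : n = 2*k + r)
    (hr : 1 ≤ r) (ht3 : 3 ≤ t) (htr : t ≤ 3*r) (h6 : t*t + 4 ≤ 6*r + 3*t)
    (h9 : 9*(r*r) ≤ 2*k)
    (hcard : P.card + t = 2*k + 4*r) : False := by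
  have hk5 : 5 ≤ k := by nlinarith
  have hd2 : 2 ≤ P.card := by omega
  set b : Fin n → ℕ := fun x => (P.filter fun Q => 3 ≤ (partOf Q x).card).card with hbdef
  set f : Fin n → ℕ := fun x => (P.filter fun Q => 4 ≤ (partOf Q x).card).card with hfdef
  -- main per-vertex inequality
  have hmain : ∀ x : Fin n, 6*r + 2 ≤ 2 * b x + f x := by
    intro x
    set Pr := P.filter (fun Q => (partOf Q x).card = 2) with hPrdef
    set Tr := P.filter (fun Q => (partOf Q x).card = 3) with hTrdef
    set Ft := P.filter (fun Q => 4 ≤ (partOf Q x).card) with hFtdef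
    set NN := univ.filter (fun y => y ≠ x ∧
        ∀ Q ∈ P, ¬((partOf Q x).card = 2 ∧ y ∈ partOf Q x)) with hNNdef
    -- a pair part through x equals {x, y} for any other element y of it
    have hpair : ∀ {Q : Finset (Finset (Fin n))}, Q ∈ P → (partOf Q x).card = 2 →
        ∀ y ∈ (partOf Q x).erase x, partOf Q x = {x, y} := by
      intro Q hQ h2 y hy
      obtain ⟨hyne, hymem⟩ := Finset.mem_erase.mp hy
      have hsub : {x, y} ⊆ partOf Q x := by
        intro z hz
        rcases Finset.mem_insert.mp hz with h | h
        · rw [h]; exact (part_mem hP hQ x).2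
        · rw [Finset.mem_singleton.mp h]; exact hymem
      have hc : ({x, y} : Finset (Fin n)).card = 2 := by
        rw [Finset.card_insert_of_notMem (by simpa using (Ne.symm hyne)),
          Finset.card_singleton]
      exact (Finset.eq_of_subset_of_card_le hsub (by omega)).symm
    -- parts of size ≥ 3 avoid all "partners" of x
    have hbigsub : ∀ {Q : Finset (Finset (Fin n))}, Q ∈ P → 3 ≤ (partOf Q x).card →
        (partOf Q x).erase x ⊆ NN := by
      intro Q hQ h3 y hy
      obtain ⟨hyne, hymem⟩ := Finset.mem_erase.mp hy
      rw [hNNdef, Finset.mem_filter]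
      refine ⟨mem_univ y, hyne, ?_⟩
      intro Q' hQ' hcon
      obtain ⟨h2', hy'⟩ := hcon
      have heq : partOf Q' x = {x, y} :=
        hpair hQ' h2' y (Finset.mem_erase.mpr ⟨hyne, hy'⟩)
      by_cases hqq : Q' = Q
      · rw [hqq] at h2'; omega
      · refine part_not_subset hP hQ' hQ hqq x x ?_
        rw [heq]
        intro z hz
        rcases Finset.mem_insert.mp hz with h | h
        · rw [h]; exact (part_mem hP hQ x).2
        · rw [Finset.mem_singleton.mp h]; exact hymem
    -- partOf determines the partition
    have hinj0 : ∀ {Q Q' : Finset (Finset (Fin n))}, Q ∈ P → Q' ∈ P →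
        partOf Q x = partOf Q' x → Q = Q' := by
      intro Q Q' hQ hQ' he
      by_contra hne
      exact part_not_subset hP hQ hQ' hne x x (he ▸ Finset.Subset.refl _)
    -- counting: Pr.card + NN.card + 1 = n
    have hPrNN : Pr.card + NN.card + 1 = n := by
      set PrU := Pr.biUnion (fun Q => (partOf Q x).erase x) with hPrU
      have hdisjU : (Pr : Set (Finset (Finset (Fin n)))).PairwiseDisjoint
          (fun Q => (partOf Q x).erase x) := by
        intro Q hQ Q' hQ' hne
        simp only [Finset.mem_coe, hPrdef, Finset.mem_filter] at hQ hQ'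
        refine Finset.disjoint_left.mpr ?_
        intro y hy hy'
        have e1 := hpair hQ.1 hQ.2 y hy
        have e2 := hpair hQ'.1 hQ'.2 y hy'
        exact hne (hinj0 hQ.1 hQ'.1 (e1.trans e2.symm))
      have hcardU : PrU.card = Pr.card := by
        rw [hPrU, Finset.card_biUnion hdisjU]
        have hone : ∀ Q ∈ Pr, ((partOf Q x).erase x).card = 1 := by
          intro Q hQ
          simp only [hPrdef, Finset.mem_filter] at hQ
          rw [Finset.card_erase_of_mem (part_mem hP hQ.1 x).2, hQ.2]
        rw [Finset.sum_congr rfl hone, Finset.sum_const, smul_eq_mul, mul_one]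
      have hcover : insert x (NN ∪ PrU) = univ := by
        apply Finset.eq_univ_of_forall
        intro y
        by_cases hyx : y = x
        · rw [hyx]; exact Finset.mem_insert_self x _
        · refine Finset.mem_insert_of_mem (Finset.mem_union.mpr ?_)
          by_cases hny : ∀ Q ∈ P, ¬((partOf Q x).card = 2 ∧ y ∈ partOf Q x)
          · left
            rw [hNNdef, Finset.mem_filter]
            exact ⟨mem_univ y, hyx, hny⟩
          · push_neg at hny
            obtain ⟨Q, hQ, h2, hy⟩ := hny
            refine Or.inr (Finset.mem_biUnion.mpr ⟨Q, ?_, ?_⟩)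
            · rw [hPrdef]; exact Finset.mem_filter.mpr ⟨hQ, h2⟩
            · exact Finset.mem_erase.mpr ⟨hyx, hy⟩
      have hdisjNN : Disjoint NN PrU := by
        refine Finset.disjoint_left.mpr ?_
        intro y hyNN hyU
        obtain ⟨Q, hQ, hy⟩ := Finset.mem_biUnion.mp hyU
        simp only [hPrdef, Finset.mem_filter] at hQ
        rw [hNNdef, Finset.mem_filter] at hyNN
        exact hyNN.2.2 Q hQ.1 ⟨hQ.2, (Finset.mem_erase.mp hy).2⟩
      have hxnot : x ∉ NN ∪ PrU := by
        rw [Finset.mem_union]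
        rintro (h | h)
        · rw [hNNdef, Finset.mem_filter] at h; exact h.2.1 rfl
        · obtain ⟨Q, hQ, hy⟩ := Finset.mem_biUnion.mp h
          exact (Finset.mem_erase.mp hy).1 rfl
      have hcards := congrArg Finset.card hcover
      rw [Finset.card_insert_of_notMem hxnot, Finset.card_union_of_disjoint hdisjNN,
        Finset.card_univ, Fintype.card_fin, hcardU] at hcards
      omega
    -- Tr.card bound via injection into 2-subsets of NN
    have hmapsinj : ∀ {Q Q' : Finset (Finset (Fin n))}, Q ∈ P → Q' ∈ P →
        (partOf Q x).erase x = (partOf Q' x).erase x → Q = Q' := by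
      intro Q Q' hQ hQ' he
      apply hinj0 hQ hQ'
      rw [← Finset.insert_erase (part_mem hP hQ x).2,
        ← Finset.insert_erase (part_mem hP hQ' x).2, he]
    have hTrNN : Tr.card ≤ (NN.card).choose 2 := by
      rw [← Finset.card_powersetCard 2 NN]
      refine Finset.card_le_card_of_injOn (fun Q => (partOf Q x).erase x)
        (fun Q hQ => ?_) (fun Q hQ Q' hQ' he => ?_)
      · simp only [hTrdef, Finset.mem_coe, Finset.mem_filter] at hQ
        rw [Finset.mem_coe, Finset.mem_powersetCard]
        refine ⟨hbigsub hQ.1 (by omega), ?_⟩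
        rw [Finset.card_erase_of_mem (part_mem hP hQ.1 x).2, hQ.2]
      · simp only [hTrdef, Finset.mem_coe, Finset.mem_filter] at hQ hQ'
        exact hmapsinj hQ.1 hQ'.1 he
    have h2x : 2 * Tr.card + NN.card ≤ NN.card * NN.card := by
      have := two_mul_choose_two NN.card
      omega
    -- with a fat part, triples avoid the pairs inside the fat part
    have h2x' : 1 ≤ Ft.card → 2 * Tr.card + 6 + NN.card ≤ NN.card * NN.card ∧
        3 ≤ NN.card := by
      intro hnef
      obtain ⟨Q₀, hQ₀⟩ := Finset.card_pos.mp (by omega : 0 < Ft.card)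
      simp only [hFtdef, Finset.mem_filter] at hQ₀
      set E₀ := (partOf Q₀ x).erase x with hE₀
      have hE₀card : 3 ≤ E₀.card := by
        rw [hE₀, Finset.card_erase_of_mem (part_mem hP hQ₀.1 x).2]
        omega
      have hE₀NN : E₀ ⊆ NN := hbigsub hQ₀.1 (by omega)
      have hδ3 : 3 ≤ NN.card := le_trans hE₀card (Finset.card_le_card hE₀NN)
      have hsubP : E₀.powersetCard 2 ⊆ NN.powersetCard 2 :=
        Finset.powersetCard_mono hE₀NN
      have hTr' : Tr.card ≤ (NN.powersetCard 2 \ E₀.powersetCard 2).card := by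
        refine Finset.card_le_card_of_injOn (fun Q => (partOf Q x).erase x)
          (fun Q hQ => ?_) (fun Q hQ Q' hQ' he => ?_)
        · simp only [hTrdef, Finset.mem_coe, Finset.mem_filter] at hQ
          rw [Finset.mem_coe, Finset.mem_sdiff]
          constructor
          · rw [Finset.mem_powersetCard]
            refine ⟨hbigsub hQ.1 (by omega), ?_⟩
            rw [Finset.card_erase_of_mem (part_mem hP hQ.1 x).2, hQ.2]
          · rw [Finset.mem_powersetCard]
            rintro ⟨hsub, -⟩
            have hQQ₀ : Q ≠ Q₀ := by
              intro h
              rw [h] at hQ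
              omega
            refine part_not_subset hP hQ.1 hQ₀.1 hQQ₀ x x ?_
            have h1 : partOf Q x = insert x ((partOf Q x).erase x) :=
              (Finset.insert_erase (part_mem hP hQ.1 x).2).symm
            have h2 : partOf Q₀ x = insert x E₀ :=
              (Finset.insert_erase (part_mem hP hQ₀.1 x).2).symm
            rw [h1, h2]
            exact Finset.insert_subset_insert x hsub
        · simp only [hTrdef, Finset.mem_coe, Finset.mem_filter] at hQ hQ'
          exact hmapsinj hQ.1 hQ'.1 he
      rw [Finset.card_sdiff_of_subset hsubP, Finset.card_powersetCard,
        Finset.card_powersetCard] at hTr'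
      have hch3 : 3 ≤ (E₀.card).choose 2 := by
        calc 3 = Nat.choose 3 2 := by decide
        _ ≤ (E₀.card).choose 2 := Nat.choose_le_choose 2 hE₀card
      have hchle : (E₀.card).choose 2 ≤ (NN.card).choose 2 :=
        Nat.choose_le_choose 2 (Finset.card_le_card hE₀NN)
      have := two_mul_choose_two NN.card
      exact ⟨by omega, hδ3⟩
    -- split of P by part size at x
    have hsplit3 : b x = Tr.card + Ft.card := by
      have hun : P.filter (fun Q => 3 ≤ (partOf Q x).card) = Tr ∪ Ft := by
        ext Q
        simp only [hTrdef, hFtdef, Finset.mem_union, Finset.mem_filter]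
        constructor
        · rintro ⟨h1, h2⟩
          rcases Nat.eq_or_lt_of_le h2 with h | h
          · exact Or.inl ⟨h1, h.symm⟩
          · exact Or.inr ⟨h1, h⟩
        · rintro (⟨h1, h2⟩ | ⟨h1, h2⟩)
          · exact ⟨h1, by omega⟩
          · exact ⟨h1, by omega⟩
      have hdisjTF : Disjoint Tr Ft := by
        refine Finset.disjoint_left.mpr ?_
        intro Q hQ hQ'
        simp only [hTrdef, Finset.mem_filter] at hQ
        simp only [hFtdef, Finset.mem_filter] at hQ'
        omega
      show (P.filter fun Q => 3 ≤ (partOf Q x).card).card = _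
      rw [hun, Finset.card_union_of_disjoint hdisjTF]
    have hPrb : Pr.card + b x = P.card := by
      have h := Finset.card_filter_add_card_filter_not
        (s := P) (p := fun Q => (partOf Q x).card = 2)
      have he : P.filter (fun Q => ¬(partOf Q x).card = 2) =
          P.filter (fun Q => 3 ≤ (partOf Q x).card) := by
        apply Finset.filter_congr
        intro Q hQ
        have := part_card_two hP hd2 hQ x
        omega
      rw [he] at h
      exact h
    -- apply the key arithmetic lemma
    have hb' : Tr.card + Ft.card + t = NN.card + 1 + 3*r := by omega
    have hkey := keyArith r t NN.card Tr.card Ft.card ht3 htr h6 hb' h2x h2x'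
    have hfx : f x = Ft.card := rfl
    omega
  -- global double counting
  have hlow : n * (6*r + 2) ≤ ∑ x : Fin n, (2 * b x + f x) := by
    calc n * (6*r + 2) = ∑ _x : Fin n, (6*r + 2) := by
          rw [Finset.sum_const, Finset.card_univ, Fintype.card_fin, smul_eq_mul]
    _ ≤ ∑ x : Fin n, (2 * b x + f x) := Finset.sum_le_sum (fun x _ => hmain x)
  have hup : ∑ x : Fin n, (2 * b x + f x) ≤ P.card * (6*r) := by
    have hsum1 : ∀ x : Fin n, 2 * b x + f x =
        ∑ Q ∈ P, (2 * (if 3 ≤ (partOf Q x).card then 1 else 0) +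
          (if 4 ≤ (partOf Q x).card then 1 else 0)) := by
      intro x
      rw [Finset.sum_add_distrib, ← Finset.mul_sum]
      show 2 * (P.filter fun Q => 3 ≤ (partOf Q x).card).card +
        (P.filter fun Q => 4 ≤ (partOf Q x).card).card = _
      rw [Finset.card_filter, Finset.card_filter]
    calc ∑ x : Fin n, (2 * b x + f x)
        = ∑ Q ∈ P, ∑ x : Fin n, (2 * (if 3 ≤ (partOf Q x).card then 1 else 0) +
            (if 4 ≤ (partOf Q x).card then 1 else 0)) := by
          rw [← Finset.sum_comm]
          exact Finset.sum_congr rfl (fun x _ => hsum1 x)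
    _ ≤ ∑ Q ∈ P, 6*r := by
          refine Finset.sum_le_sum (fun Q hQ => ?_)
          have hdisj := (hP.1 Q hQ).2.2.1
          have hcov := (hP.1 Q hQ).2.2.2
          rw [sum_partOf hdisj hcov (fun A => 2 * (if 3 ≤ A.card then 1 else 0) +
            (if 4 ≤ A.card then 1 else 0))]
          have hA2 : ∀ A ∈ Q, 2 ≤ A.card := by
            intro A hA
            have hAne : A.Nonempty := by
              rcases Finset.eq_empty_or_nonempty A with h | h
              · exact absurd (h ▸ hA) (hP.1 Q hQ).2.1
              · exact h
            obtain ⟨y, hy⟩ := hAne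
            have := part_card_two hP hd2 hQ y
            rwa [part_eq hP hQ hA hy] at this
          have hsumcard : ∑ A ∈ Q, A.card = n := by
            have h1 := sum_partOf hdisj hcov (fun _ => 1)
            simp only [mul_one, Finset.sum_const, Finset.card_univ,
              Fintype.card_fin, smul_eq_mul] at h1
            omega
          have hsumr : ∑ A ∈ Q, (A.card - 2) = r := by
            have he : ∑ A ∈ Q, ((A.card - 2) + 2) = ∑ A ∈ Q, A.card :=
              Finset.sum_congr rfl (fun A hA => by have := hA2 A hA; omega)
            rw [Finset.sum_add_distrib, Finset.sum_const, smul_eq_mul,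
              hsumcard] at he
            have hk := (hP.1 Q hQ).1
            rw [hk] at he
            omega
          calc ∑ A ∈ Q, A.card * (2 * (if 3 ≤ A.card then 1 else 0) +
                (if 4 ≤ A.card then 1 else 0))
              ≤ ∑ A ∈ Q, 6 * (A.card - 2) := by
                refine Finset.sum_le_sum (fun A hA => ?_)
                have := hA2 A hA
                split_ifs <;> omega
          _ = 6 * r := by rw [← Finset.mul_sum, hsumr]
    _ = P.card * (6*r) := by rw [Finset.sum_const, smul_eq_mul]
  -- final contradiction
  have hfin : n * (6*r+2) ≤ P.card * (6*r) := le_trans hlow hup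
  have hdval : P.card = 2*k + 4*r - t := by omega
  rw [hdval, hn] at hfin
  have ht2 : t ≤ 2*k + 4*r := by omega
  zify [ht2] at hfin
  nlinarith [hfin, h9, hr, ht3, htr]



lemma sperner_subset {n k : ℕ} {P P' : Finset (Finset (Finset (Fin n)))}
    (hsub : P' ⊆ P) (h : IsSpernerPartitionSystem n k P) :
    IsSpernerPartitionSystem n k P' :=
  ⟨fun Q hQ => h.1 Q (hsub hQ),
   fun Q₁ h₁ Q₂ h₂ => h.2 Q₁ (hsub h₁) Q₂ (hsub h₂)⟩

lemma sp_nat_bound (k r t : ℕ) (hr : 1 ≤ r) (ht3 : 3 ≤ t) (htr : t ≤ 3*r)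
    (h6 : t*t + 4 ≤ 6*r + 3*t) (h9 : 9*(r*r) ≤ 2*k) :
    SP (2*k + r) k ≤ 2*k + 4*r - t - 1 := by
  have hk5 : 5 ≤ k := by nlinarith
  apply csSup_le
  · refine ⟨0, ∅, ⟨?_, ?_⟩, rfl⟩
    · intro Q hQ; simp at hQ
    · intro Q₁ h₁; simp at h₁
  · rintro m ⟨P, hPs, hm⟩
    by_contra hgt
    push_neg at hgt
    have hge : 2*k + 4*r - t ≤ m := by omega
    obtain ⟨P', hsub, hcard'⟩ := Finset.exists_subset_card_eq
      (by omega : 2*k + 4*r - t ≤ P.card)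
    exact core (sperner_subset hsub hPs) r t rfl hr ht3 htr h6 h9 (by omega)

end SpernerAux

/-- Lemma 8: for `k ≥ 4` and `1 ≤ r ≤ (1/3)√(2k)`, with `t = ⌈(1 + √(1 + 24r))/2⌉`
(the ceiling of the unique `q ≥ 2` with `q(q-1)/2 = 3r`),
`SP(2k + r, k) ≤ 2k + 4r - t - 1`. -/
theorem sperner_small_r_upper_bound (k r : ℕ) (hk : 4 ≤ k) (hr1 : 1 ≤ r)
    (hr2 : (3 * r : ℝ) ≤ Real.sqrt (2 * k)) :
    (SP (2 * k + r) k : ℝ) ≤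
      2 * k + 4 * r - ((⌈(1 + Real.sqrt (1 + 24 * (r : ℝ))) / 2⌉ : ℤ) : ℝ) - 1 := by
  have h24 : (0:ℝ) ≤ 1 + 24 * (r:ℝ) := by positivity
  have hr1' : (1:ℝ) ≤ (r:ℝ) := by exact_mod_cast hr1
  set s : ℝ := Real.sqrt (1 + 24 * (r:ℝ)) with hsdef
  have hs2 : s ^ 2 = 1 + 24 * (r:ℝ) := Real.sq_sqrt h24
  have hs0 : 0 ≤ s := Real.sqrt_nonneg _
  have hs5 : (5:ℝ) ≤ s := by
    have h25 : (25:ℝ) ≤ 1 + 24 * (r:ℝ) := by linarith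
    have := Real.sqrt_le_sqrt h25
    rwa [show (25:ℝ) = 5^2 by norm_num, Real.sqrt_sq (by norm_num : (0:ℝ) ≤ 5)] at this
  have hsle : s ≤ 6 * (r:ℝ) - 1 := by
    have h1 : (1:ℝ) + 24 * r ≤ (6 * (r:ℝ) - 1)^2 := by nlinarith
    have := Real.sqrt_le_sqrt h1
    rwa [Real.sqrt_sq (by linarith : (0:ℝ) ≤ 6 * (r:ℝ) - 1)] at this
  set q : ℝ := (1 + s) / 2 with hqdef
  have hq3 : (3:ℝ) ≤ q := by rw [hqdef]; linarith
  have hq3r : q ≤ 3 * (r:ℝ) := by rw [hqdef]; linarith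
  have hqq : q * (q - 1) = 6 * (r:ℝ) := by
    rw [hqdef]
    nlinarith [hs2]
  set T : ℤ := ⌈q⌉ with hTdef
  have hT3 : (3:ℤ) ≤ T := by
    have h1 : q ≤ (T:ℝ) := Int.le_ceil q
    have : (3:ℝ) ≤ (T:ℝ) := le_trans hq3 h1
    exact_mod_cast this
  have hT3r : T ≤ 3 * (r:ℤ) := by
    rw [hTdef]
    have : ((3 * r : ℤ) : ℝ) = 3 * (r:ℝ) := by push_cast; ring
    exact Int.ceil_le.mpr (by rw [this]; exact hq3r)
  have hTlt : ((T:ℝ) - 1) < q := by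
    have := Int.ceil_lt_add_one q
    rw [← hTdef] at this
    linarith
  have hprod : (T - 1) * (T - 2) < 6 * (r:ℤ) := by
    have h1 : ((T:ℝ) - 1) * ((T:ℝ) - 2) < q * (q - 1) := by
      have ha : (0:ℝ) ≤ (T:ℝ) - 2 := by
        have : (3:ℝ) ≤ (T:ℝ) := by exact_mod_cast hT3
        linarith
      have hb : (T:ℝ) - 2 < q - 1 := by linarith
      have hc : (0:ℝ) < q := by linarith
      nlinarith
    rw [hqq] at h1
    have h2 : (((T - 1) * (T - 2) : ℤ) : ℝ) < ((6 * r : ℤ) : ℝ) := by push_cast; push_cast at h1; linarith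
    exact_mod_cast h2
  have heven : ∃ m : ℤ, (T - 1) * (T - 2) = 2 * m := by
    rcases Int.even_mul_succ_self (T - 2) with ⟨m, hm⟩
    exact ⟨m, by rw [mul_comm]; rw [show T - 2 + 1 = T - 1 by ring] at hm; omega⟩
  obtain ⟨me, hme⟩ := heven
  have hprod2 : (T - 1) * (T - 2) + 2 ≤ 6 * (r:ℤ) := by omega
  -- move to ℕ
  set t : ℕ := T.toNat with htdef
  have htT : (t:ℤ) = T := Int.toNat_of_nonneg (by omega)
  have ht3 : 3 ≤ t := by omega
  have htr : t ≤ 3 * r := by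
    have : (t:ℤ) ≤ 3 * (r:ℤ) := by rw [htT]; exact hT3r
    exact_mod_cast this
  have h6 : t*t + 4 ≤ 6*r + 3*t := by
    have h1 : (T - 1) * (T - 2) = T*T - 3*T + 2 := by ring
    have h2 : (t:ℤ)*(t:ℤ) + 4 ≤ 6*(r:ℤ) + 3*(t:ℤ) := by rw [htT]; omega
    exact_mod_cast h2
  have h9 : 9*(r*r) ≤ 2*k := by
    have hx : (0:ℝ) ≤ 2 * (k:ℝ) := by positivity
    have h1 : (3*(r:ℝ)) * (3*(r:ℝ)) ≤ Real.sqrt (2*k) * Real.sqrt (2*k) :=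
      mul_self_le_mul_self (by positivity) hr2
    rw [Real.mul_self_sqrt hx] at h1
    have h2 : ((9*(r*r):ℕ):ℝ) ≤ ((2*k:ℕ):ℝ) := by push_cast; linarith
    exact_mod_cast h2
  have hSP : SP (2*k + r) k ≤ 2*k + 4*r - t - 1 :=
    sp_nat_bound k r t hr1 ht3 htr h6 h9
  have hk5 : 5 ≤ k := by nlinarith
  have htb : t + 1 ≤ 2*k + 4*r := by omega
  have hcast : ((2*k + 4*r - t - 1 : ℕ) : ℝ) = 2*(k:ℝ) + 4*(r:ℝ) - (t:ℝ) - 1 := by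
    have e1 : 2*k + 4*r - t - 1 = 2*k + 4*r - (t + 1) := by omega
    rw [e1, Nat.cast_sub htb]
    push_cast
    ring
  calc (SP (2*k+r) k : ℝ) ≤ ((2*k + 4*r - t - 1 : ℕ) : ℝ) := by exact_mod_cast hSP
  _ = 2*(k:ℝ) + 4*(r:ℝ) - (t:ℝ) - 1 := hcast
  _ = 2*(k:ℝ) + 4*(r:ℝ) - ((T:ℤ):ℝ) - 1 := by rw [← htT]; norm_num
  _ = 2 * (k:ℝ) + 4 * (r:ℝ) - ((⌈(1 + Real.sqrt (1 + 24 * (r : ℝ))) / 2⌉ : ℤ) : ℝ) - 1 := by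
        rw [hTdef, hqdef, hsdef]
end

section
/- Let k ≥ 3 be odd and n > 2k an integer with n ≡ k+1 (mod 2k). Then Q ≤ a(u)/(k−1) ≤ MMS(n,k); in particular Q ≤ MMS(n,k). -/
/-- The Meagher–Moura–Stevens bound `MMS(n,k) = C(n,c) / (k - r + r(c+1)/(n-c))`,
where `c = n / k` and `r = n % k`. -/
noncomputable def MMS (n k : ℕ) : ℝ :=
  (n.choose (n / k) : ℝ) /
    ((k : ℝ) - (n % k : ℕ) + (n % k : ℕ) * ((n / k : ℕ) + 1) / ((n : ℝ) - (n / k : ℕ)))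


/-- `e_ℓ = C(n/2, d-ℓ)·C(n/2, d+1+ℓ)` (sizes of the classes of `(2d+1)`-sets). -/
def ee (n d ℓ : ℕ) : ℕ := (n / 2).choose (d - ℓ) * (n / 2).choose (d + 1 + ℓ)

/-- `e*_ℓ = C(n/2, d+1-ℓ)·C(n/2, d+1+ℓ)` (sizes of the classes of `(2d+2)`-sets). -/
def es (n d ℓ : ℕ) : ℕ := (n / 2).choose (d + 1 - ℓ) * (n / 2).choose (d + 1 + ℓ)

/-- `a(x) = 2·Σ_{ℓ=x+1}^{d} e_ℓ`. -/
def aF (n d x : ℕ) : ℕ := 2 * ∑ ℓ ∈ Finset.Icc (x + 1) d, ee n d ℓ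

/-- `b(x) = e*_0 + Σ_{ℓ=1}^{x} e*_ℓ`. -/
def bF (n d x : ℕ) : ℕ := es n d 0 + ∑ ℓ ∈ Finset.Icc 1 x, es n d ℓ

/-- `Φ = {(i,j) : u+1 ≤ i ≤ j ≤ d, j - i ≤ u}`. -/
def Phi (u d : ℕ) : Finset (ℕ × ℕ) :=
  (Finset.Icc (u + 1) d ×ˢ Finset.Icc (u + 1) d).filter fun p => p.1 ≤ p.2 ∧ p.2 - p.1 ≤ u

/-- The sequence `η*_0, …, η*_u` determined by `Q`: it sums (with `⌊η*_0/2⌋` in place of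
`η*_0`) to `Q/2`, and is a "greedy prefix" of `e*_0, …, e*_u`. -/
def EtaSpec (n d u Q : ℕ) (η : ℕ → ℕ) : Prop :=
  η 0 / 2 + ∑ ℓ ∈ Finset.Icc 1 u, η ℓ = Q / 2 ∧
  ∃ x ≤ u, (∀ ℓ < x, η ℓ = es n d ℓ) ∧ η x < es n d x ∧
    (∀ ℓ, x < ℓ → ℓ ≤ u → η ℓ = 0) ∧ (x = 0 → η 0 % 2 = es n d 0 % 2)

/-- Feasibility for the integer program `I_(n,k)` of Definition 9. -/
def Feasible (n d u : ℕ) (η : ℕ → ℕ) (sol : ℕ × ℕ → ℕ) : Prop :=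
  (∀ ℓ ∈ Finset.Icc 1 u,
    ∑ p ∈ (Phi u d).filter (fun p => p.2 = p.1 + ℓ), sol p ≤ η ℓ) ∧
  (∑ p ∈ (Phi u d).filter (fun p => p.2 = p.1), sol p ≤ η 0 / 2) ∧
  (∀ ℓ ∈ Finset.Icc (u + 1) d,
    (∑ p ∈ (Phi u d).filter (fun p => p.1 = ℓ), sol p) +
      (∑ p ∈ (Phi u d).filter (fun p => p.2 = ℓ), sol p) ≤ ee n d ℓ)

lemma es_ee_id {n d ℓ : ℕ} (hl : ℓ ≤ d) (hd : d ≤ n / 2) :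
    es n d ℓ * (d + 1 - ℓ) = ee n d ℓ * (n / 2 - d + ℓ) := by
  unfold es ee
  have h1 : d + 1 - ℓ = (d - ℓ) + 1 := by omega
  have h2 : n / 2 - d + ℓ = n / 2 - (d - ℓ) := by omega
  rw [h1, h2, mul_right_comm, Nat.choose_succ_right_eq]
  ring

lemma ee_step {n d ℓ : ℕ} (hl : ℓ < d) (hd : d ≤ n / 2) :
    ee n d (ℓ + 1) ≤ ee n d ℓ := by
  set m := n / 2 with hm
  have h1 : m.choose (d - ℓ) * (d - ℓ) = m.choose (d - (ℓ+1)) * (m - d + (ℓ+1)) := by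
    have e1 : d - ℓ = (d - (ℓ+1)) + 1 := by omega
    have e2 : m - (d - (ℓ+1)) = m - d + (ℓ+1) := by omega
    rw [e1, Nat.choose_succ_right_eq, e2]
  have h2 : m.choose (d + 2 + ℓ) * (d + 2 + ℓ) = m.choose (d + 1 + ℓ) * (m - (d + 1 + ℓ)) := by
    have e1 : d + 2 + ℓ = (d + 1 + ℓ) + 1 := by omega
    rw [e1, Nat.choose_succ_right_eq]
  have key : ee n d (ℓ+1) * ((d + 2 + ℓ) * (m - d + (ℓ+1))) =
      ee n d ℓ * ((d - ℓ) * (m - (d + 1 + ℓ))) := by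
    unfold ee
    rw [← hm, show d + 1 + (ℓ + 1) = d + 2 + ℓ from by omega]
    calc m.choose (d - (ℓ+1)) * m.choose (d+2+ℓ) * ((d+2+ℓ) * (m - d + (ℓ+1)))
        = (m.choose (d - (ℓ+1)) * (m - d + (ℓ+1))) * (m.choose (d+2+ℓ) * (d+2+ℓ)) := by ring
      _ = (m.choose (d - ℓ) * (d - ℓ)) * (m.choose (d+1+ℓ) * (m - (d+1+ℓ))) := by rw [← h1, h2]
      _ = m.choose (d-ℓ) * m.choose (d+1+ℓ) * ((d-ℓ) * (m - (d+1+ℓ))) := by ring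
  have hle : ee n d ℓ * ((d - ℓ) * (m - (d+1+ℓ))) ≤
      ee n d ℓ * ((d + 2 + ℓ) * (m - d + (ℓ+1))) :=
    Nat.mul_le_mul_left _ (Nat.mul_le_mul (by omega) (by omega))
  have hpos : 0 < (d + 2 + ℓ) * (m - d + (ℓ+1)) := by positivity
  exact Nat.le_of_mul_le_mul_right (key ▸ hle) hpos

lemma es_step {n d ℓ : ℕ} (hl : ℓ < d) (hd : d < n / 2) :
    es n d (ℓ + 1) ≤ es n d ℓ := by
  set m := n / 2 with hm
  have h1 : m.choose (d + 1 - ℓ) * (d + 1 - ℓ) = m.choose (d - ℓ) * (m - d + ℓ) := by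
    have e1 : d + 1 - ℓ = (d - ℓ) + 1 := by omega
    have e2 : m - (d - ℓ) = m - d + ℓ := by omega
    rw [e1, Nat.choose_succ_right_eq, e2]
  have h2 : m.choose (d + 2 + ℓ) * (d + 2 + ℓ) = m.choose (d + 1 + ℓ) * (m - (d + 1 + ℓ)) := by
    have e1 : d + 2 + ℓ = (d + 1 + ℓ) + 1 := by omega
    rw [e1, Nat.choose_succ_right_eq]
  have key : es n d (ℓ+1) * ((d + 2 + ℓ) * (m - d + ℓ)) =
      es n d ℓ * ((d + 1 - ℓ) * (m - (d + 1 + ℓ))) := by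
    unfold es
    rw [← hm, show d + 1 + (ℓ + 1) = d + 2 + ℓ from by omega,
      show d + 1 - (ℓ + 1) = d - ℓ from by omega]
    calc m.choose (d - ℓ) * m.choose (d+2+ℓ) * ((d+2+ℓ) * (m - d + ℓ))
        = (m.choose (d - ℓ) * (m - d + ℓ)) * (m.choose (d+2+ℓ) * (d+2+ℓ)) := by ring
      _ = (m.choose (d + 1 - ℓ) * (d + 1 - ℓ)) * (m.choose (d+1+ℓ) * (m - (d+1+ℓ))) := by
          rw [← h1, h2]
      _ = m.choose (d+1-ℓ) * m.choose (d+1+ℓ) * ((d+1-ℓ) * (m - (d+1+ℓ))) := by ring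
  have hle : es n d ℓ * ((d + 1 - ℓ) * (m - (d+1+ℓ))) ≤
      es n d ℓ * ((d + 2 + ℓ) * (m - d + ℓ)) :=
    Nat.mul_le_mul_left _ (Nat.mul_le_mul (by omega) (by omega))
  have hpos : 0 < (d + 2 + ℓ) * (m - d + ℓ) := by
    have : 0 < m - d + ℓ := by omega
    positivity
  exact Nat.le_of_mul_le_mul_right (key ▸ hle) hpos

lemma ee_anti {n d a b : ℕ} (hd : d ≤ n / 2) (hab : a ≤ b) (hbd : b ≤ d) :
    ee n d b ≤ ee n d a := by
  induction b, hab using Nat.le_induction with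
  | base => exact le_refl _
  | succ b hab ih => exact (ee_step (by omega) hd).trans (ih (by omega))

lemma es_anti {n d a b : ℕ} (hd : d < n / 2) (hab : a ≤ b) (hbd : b ≤ d) :
    es n d b ≤ es n d a := by
  induction b, hab using Nat.le_induction with
  | base => exact le_refl _
  | succ b hab ih => exact (es_step (by omega) hd).trans (ih (by omega))

lemma vandermonde_split (m d : ℕ) :
    (m + m).choose (2 * d + 1) =
      2 * ∑ ℓ ∈ Finset.range (d + 1), m.choose (d - ℓ) * m.choose (d + 1 + ℓ) := by
  rw [Nat.add_choose_eq, Finset.Nat.sum_antidiagonal_eq_sum_range_succ_mk]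
  dsimp only
  rw [show (2*d+1).succ = 2*d+2 from by omega, Finset.range_eq_Ico,
    ← Finset.sum_Ico_consecutive _ (Nat.zero_le (d+1)) (by omega : d+1 ≤ 2*d+2)]
  have h1 : ∑ i ∈ Finset.Ico 0 (d+1), m.choose i * m.choose (2*d+1-i)
      = ∑ ℓ ∈ Finset.range (d+1), m.choose (d - ℓ) * m.choose (d + 1 + ℓ) := by
    rw [← Finset.range_eq_Ico, ← Finset.sum_range_reflect]
    refine Finset.sum_congr rfl fun ℓ hℓ => ?_
    have hℓd : ℓ ≤ d := by simpa [Nat.lt_succ_iff] using hℓ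
    have e1 : d + 1 - 1 - ℓ = d - ℓ := by omega
    have e2 : 2*d+1 - (d - ℓ) = d + 1 + ℓ := by omega
    rw [e1, e2]
  have h2 : ∑ i ∈ Finset.Ico (d+1) (2*d+2), m.choose i * m.choose (2*d+1-i)
      = ∑ ℓ ∈ Finset.range (d+1), m.choose (d - ℓ) * m.choose (d + 1 + ℓ) := by
    rw [Finset.sum_Ico_eq_sum_range]
    have e0 : 2*d+2 - (d+1) = d+1 := by omega
    rw [e0]
    refine Finset.sum_congr rfl fun ℓ hℓ => ?_
    have hℓd : ℓ ≤ d := by simpa [Nat.lt_succ_iff] using hℓ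
    have e2 : 2*d+1 - (d + 1 + ℓ) = d - ℓ := by omega
    rw [show d + 1 + ℓ = d + 1 + ℓ from rfl, e2]
    ring
  rw [h1, h2]
  ring

lemma num1 (d x j p : ℕ) (h1 : 3 * x ≤ d) (h2 : d ≤ 3 * x + 2) (hj : 1 ≤ j) (hp : d ≤ p) :
    2*(d - x)*(d + 1 - x) ≤ (2*j)*((x+1)*((2*p + j + 1) + x)) := by
  zify [show x ≤ d from by omega, show x ≤ d + 1 from by omega]
  have hdZ : (3:ℤ)*(x:ℤ) ≤ (d:ℤ) := by exact_mod_cast h1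
  have hdZ2 : (d:ℤ) ≤ 3*(x:ℤ)+2 := by exact_mod_cast h2
  have hjZ : (1:ℤ) ≤ (j:ℤ) := by exact_mod_cast hj
  have hpZ : (d:ℤ) ≤ (p:ℤ) := by exact_mod_cast hp
  have hx0 : (0:ℤ) ≤ (x:ℤ) := by positivity
  have hd0 : (0:ℤ) ≤ (d:ℤ) := by positivity
  have step1 : (2:ℤ)*(d:ℤ)+2+(x:ℤ) ≤ (j:ℤ)*(2*(p:ℤ)+(j:ℤ)+1+(x:ℤ)) := by
    nlinarith [mul_nonneg (sub_nonneg.2 hjZ)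
      (show (0:ℤ) ≤ 2*(p:ℤ)+(j:ℤ)+1+(x:ℤ) by positivity)]
  have step2 : ((d:ℤ)-(x:ℤ))*((d:ℤ)+1-(x:ℤ)) ≤ ((x:ℤ)+1)*(2*(d:ℤ)+2+(x:ℤ)) := by
    nlinarith [mul_nonneg (sub_nonneg.2 hdZ2) hd0, mul_nonneg hx0 hd0]
  nlinarith [mul_le_mul_of_nonneg_left step1
    (show (0:ℤ) ≤ 2*((x:ℤ)+1) by positivity), step2]

lemma num2 (d x ℓ j p : ℕ) (h1 : 3 * x ≤ d) (hj : 1 ≤ j) (hp : d ≤ p) (hl : ℓ ≤ x) :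
    ((2*p + j + 1) + ℓ) * (d+1) ≤ (2*(2*p + j + 1) - 1) * (d + 1 - ℓ) := by
  zify [show ℓ ≤ d + 1 from by omega, show (1:ℕ) ≤ 2*(2*p+j+1) from by omega]
  have hdZ : (3:ℤ)*(x:ℤ) ≤ (d:ℤ) := by exact_mod_cast h1
  have hjZ : (1:ℤ) ≤ (j:ℤ) := by exact_mod_cast hj
  have hpZ : (d:ℤ) ≤ (p:ℤ) := by exact_mod_cast hp
  have hlZ : (ℓ:ℤ) ≤ (x:ℤ) := by exact_mod_cast hl
  have h0l : (0:ℤ) ≤ (ℓ:ℤ) := by positivity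
  have hM : (2:ℤ)*(d:ℤ)+2 ≤ 2*(p:ℤ)+(j:ℤ)+1 := by linarith
  have h2l : (0:ℤ) ≤ (d:ℤ)+1-2*(ℓ:ℤ) := by linarith
  nlinarith [mul_le_mul_of_nonneg_right hM h2l,
    mul_nonneg (show (0:ℤ) ≤ (d:ℤ)+1 by positivity)
      (show (0:ℤ) ≤ 2*(d:ℤ)+1-5*(ℓ:ℤ) by linarith)]

set_option maxHeartbeats 1000000 in
/-- `Q ≤ a(u)/(k-1) ≤ MMS(n,k)` for odd `k ≥ 3` and `n = (2d+1)k + 1 > 2k`. -/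
theorem Q_le_MMS_k_add_one (n k d u Q : ℕ)
    (hkodd : Odd k) (hk : 3 ≤ k) (hn2k : 2 * k < n) (hn : n = (2 * d + 1) * k + 1)
    (hu : IsLeast {x : ℕ | x ≤ d ∧ aF n d x ≤ (k - 1) * bF n d x} u)
    (hQ : IsGreatest {q : ℕ | Even q ∧ q ≤ aF n d u / (k - 1)} Q) :
    (Q : ℝ) ≤ (aF n d u : ℝ) / ((k : ℝ) - 1) ∧
    (aF n d u : ℝ) / ((k : ℝ) - 1) ≤ MMS n k := by
  obtain ⟨j, hj⟩ := hkodd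
  have hj1 : 1 ≤ j := by omega
  have hd1 : 1 ≤ d := by
    rcases Nat.eq_zero_or_pos d with h | h
    · exfalso; subst h; omega
    · exact h
  obtain ⟨p, hp⟩ : ∃ p, p = d * j := ⟨_, rfl⟩
  have hpd : d ≤ p := by rw [hp]; exact Nat.le_mul_of_pos_right d (by omega)
  have hn' : n = 4*p + 2*d + 2*j + 2 := by rw [hn, hj, hp]; ring
  have hm : n / 2 = 2*p + d + j + 1 := by omega
  have hdm : d < n / 2 := by omega
  have hdm' : d ≤ n / 2 := le_of_lt hdm
  -- the pivot x₀ = d / 3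
  obtain ⟨x₀, hx₀⟩ : ∃ x, x = d / 3 := ⟨_, rfl⟩
  have hx3 : 3 * x₀ ≤ d ∧ d ≤ 3 * x₀ + 2 := by omega
  have hx0d : x₀ ≤ d := by omega
  -- Step A : aF x₀ ≤ (k-1) bF x₀, hence u ≤ x₀
  have key1 : 2*(d - x₀)*(d + 1 - x₀) ≤ (k-1)*((x₀+1)*((n/2 - d) + x₀)) := by
    have h1 : k - 1 = 2*j := by omega
    have h2 : n/2 - d = 2*p + j + 1 := by omega
    rw [h1, h2]
    exact num1 d x₀ j p hx3.1 hx3.2 hj1 hpd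
  have haF : aF n d x₀ ≤ 2 * ((d - x₀) * ee n d x₀) := by
    unfold aF
    have hb := Finset.sum_le_card_nsmul (Finset.Icc (x₀+1) d) (ee n d) (ee n d x₀)
      (fun i hi => by
        rw [Finset.mem_Icc] at hi
        exact ee_anti hdm' (by omega) hi.2)
    rw [Nat.card_Icc] at hb
    simp only [smul_eq_mul] at hb
    have he : d + 1 - (x₀ + 1) = d - x₀ := by omega
    rw [he] at hb
    exact Nat.mul_le_mul_left _ hb
  have hbF : (x₀ + 1) * es n d x₀ ≤ bF n d x₀ := by
    unfold bF
    have h1 : es n d x₀ ≤ es n d 0 := es_anti hdm (Nat.zero_le _) hx0d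
    have h2 : x₀ * es n d x₀ ≤ ∑ ℓ ∈ Finset.Icc 1 x₀, es n d ℓ := by
      have hb := Finset.card_nsmul_le_sum (Finset.Icc 1 x₀) (es n d) (es n d x₀)
        (fun i hi => by
          rw [Finset.mem_Icc] at hi
          exact es_anti hdm hi.2 hx0d)
      rw [Nat.card_Icc] at hb
      simp only [smul_eq_mul] at hb
      have he : x₀ + 1 - 1 = x₀ := by omega
      rw [he] at hb
      exact hb
    calc (x₀ + 1) * es n d x₀ = es n d x₀ + x₀ * es n d x₀ := by ring
      _ ≤ es n d 0 + ∑ ℓ ∈ Finset.Icc 1 x₀, es n d ℓ := Nat.add_le_add h1 h2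
  have hAx₀ : aF n d x₀ ≤ (k-1) * bF n d x₀ := by
    have hcancel : 0 < d + 1 - x₀ := by omega
    apply Nat.le_of_mul_le_mul_right _ hcancel
    calc aF n d x₀ * (d+1-x₀) ≤ (2*((d-x₀) * ee n d x₀)) * (d+1-x₀) :=
          Nat.mul_le_mul_right _ haF
      _ = (2*(d-x₀)*(d+1-x₀)) * ee n d x₀ := by ring
      _ ≤ ((k-1)*((x₀+1)*((n/2-d)+x₀))) * ee n d x₀ := Nat.mul_le_mul_right _ key1
      _ = (k-1)*(x₀+1)*(ee n d x₀ * ((n/2-d)+x₀)) := by ring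
      _ = (k-1)*(x₀+1)*(es n d x₀ * (d+1-x₀)) := by rw [← es_ee_id hx0d hdm']
      _ = ((k-1)*((x₀+1) * es n d x₀)) * (d+1-x₀) := by ring
      _ ≤ ((k-1) * bF n d x₀) * (d+1-x₀) :=
          Nat.mul_le_mul_right _ (Nat.mul_le_mul_left _ hbF)
  have hux : u ≤ x₀ := hu.2 ⟨hx0d, hAx₀⟩
  have hud : u ≤ d := hu.1.1
  have hAB : aF n d u ≤ (k-1) * bF n d u := hu.1.2
  -- Step B : termwise inequality for ℓ ≤ u
  have hterm : ∀ ℓ ≤ u, es n d ℓ * (d+1) ≤ ee n d ℓ * (2*(n/2 - d) - 1) := by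
    intro ℓ hℓ
    have hl : ℓ ≤ d := le_trans hℓ hud
    have hc : 0 < d + 1 - ℓ := by omega
    have key2 : ((n/2-d)+ℓ) * (d+1) ≤ (2*(n/2-d)-1) * (d+1-ℓ) := by
      have h2 : n/2 - d = 2*p + j + 1 := by omega
      rw [h2]
      exact num2 d x₀ ℓ j p hx3.1 hj1 hpd (le_trans hℓ hux)
    apply Nat.le_of_mul_le_mul_right _ hc
    calc es n d ℓ * (d+1) * (d+1-ℓ) = (es n d ℓ * (d+1-ℓ)) * (d+1) := by ring
      _ = ee n d ℓ * ((n/2-d)+ℓ) * (d+1) := by rw [es_ee_id hl hdm']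
      _ = ee n d ℓ * (((n/2-d)+ℓ) * (d+1)) := by ring
      _ ≤ ee n d ℓ * ((2*(n/2-d)-1) * (d+1-ℓ)) := Nat.mul_le_mul_left _ key2
      _ = ee n d ℓ * (2*(n/2-d)-1) * (d+1-ℓ) := by ring
  -- sums
  have hbFsum : bF n d u = ∑ ℓ ∈ Finset.range (u+1), es n d ℓ := by
    unfold bF
    rw [Finset.range_eq_Ico,
      ← Finset.sum_Ico_consecutive _ (Nat.zero_le 1) (by omega : 1 ≤ u+1),
      show Finset.Ico 1 (u+1) = Finset.Icc 1 u from Finset.Ico_add_one_right_eq_Icc 1 u]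
    simp
  have hBsum : bF n d u * (d+1) ≤
      (∑ ℓ ∈ Finset.range (u+1), ee n d ℓ) * (2*(n/2-d)-1) := by
    rw [hbFsum, Finset.sum_mul, Finset.sum_mul]
    exact Finset.sum_le_sum fun ℓ hℓ => hterm ℓ (by
      have := Finset.mem_range.mp hℓ; omega)
  -- Vandermonde
  have hC : n.choose (2*d+1) = aF n d u + 2 * ∑ ℓ ∈ Finset.range (u+1), ee n d ℓ := by
    have h2m : n/2 + n/2 = n := by omega
    have hv := vandermonde_split (n/2) d
    rw [h2m] at hv
    have hsplit : ∑ ℓ ∈ Finset.range (d+1), ee n d ℓ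
        = (∑ ℓ ∈ Finset.range (u+1), ee n d ℓ) + ∑ ℓ ∈ Finset.Icc (u+1) d, ee n d ℓ := by
      rw [Finset.range_eq_Ico,
        ← Finset.sum_Ico_consecutive _ (Nat.zero_le (u+1)) (by omega : u+1 ≤ d+1),
        show Finset.Ico (u+1) (d+1) = Finset.Icc (u+1) d from Finset.Ico_add_one_right_eq_Icc (u+1) d, ← Finset.range_eq_Ico]
    rw [show (∑ ℓ ∈ Finset.range (d+1), (n/2).choose (d - ℓ) * (n/2).choose (d + 1 + ℓ))
        = ∑ ℓ ∈ Finset.range (d+1), ee n d ℓ from rfl] at hv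
    rw [hv, hsplit]
    unfold aF
    ring
  -- main nat inequality
  have hmain : aF n d u * (2*d+2) ≤
      2 * (∑ ℓ ∈ Finset.range (u+1), ee n d ℓ) * ((k-1) * (2*(n/2-d)-1)) := by
    calc aF n d u * (2*d+2) = 2 * (aF n d u * (d+1)) := by ring
      _ ≤ 2 * (((k-1) * bF n d u) * (d+1)) :=
          Nat.mul_le_mul_left _ (Nat.mul_le_mul_right _ hAB)
      _ = 2 * ((k-1) * (bF n d u * (d+1))) := by ring
      _ ≤ 2 * ((k-1) * ((∑ ℓ ∈ Finset.range (u+1), ee n d ℓ) * (2*(n/2-d)-1))) :=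
          Nat.mul_le_mul_left _ (Nat.mul_le_mul_left _ hBsum)
      _ = 2 * (∑ ℓ ∈ Finset.range (u+1), ee n d ℓ) * ((k-1) * (2*(n/2-d)-1)) := by ring
  -- arithmetic facts for the real part
  have hdiv : n / k = 2*d+1 := by
    rw [hn, add_comm, Nat.add_mul_div_right _ _ (show 0 < k from by omega),
      Nat.div_eq_of_lt (show 1 < k from by omega)]
    omega
  have hmod : n % k = 1 := by
    rw [hn, add_comm, Nat.add_mul_mod_self_right, Nat.mod_eq_of_lt (show 1 < k from by omega)]
  obtain ⟨W, hW⟩ : ∃ W, W = 2*(n/2-d)-1 := ⟨_, rfl⟩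
  have hWn : W = n - (2*d+1) := by omega
  have hW1 : 1 ≤ W := by omega
  have hk1R : (0:ℝ) < (k:ℝ) - 1 :=
    sub_pos.mpr (by exact_mod_cast (show (1:ℕ) < k from by omega))
  have hWpos : (0:ℝ) < (W:ℝ) := by exact_mod_cast hW1
  have hkcast : ((k-1 : ℕ) : ℝ) = (k:ℝ) - 1 := by
    have h1k : 1 ≤ k := by omega
    push_cast [h1k]
    ring
  constructor
  · -- Q ≤ aF/(k-1)
    have h1 : Q ≤ aF n d u / (k-1) := hQ.1.2
    calc (Q:ℝ) ≤ ((aF n d u / (k-1) : ℕ) : ℝ) := by exact_mod_cast h1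
      _ ≤ (aF n d u : ℝ) / ((k-1 : ℕ) : ℝ) := Nat.cast_div_le
      _ = (aF n d u : ℝ) / ((k:ℝ) - 1) := by rw [hkcast]
  · -- aF/(k-1) ≤ MMS
    have hMMS : MMS n k =
        (n.choose (2*d+1) : ℝ) / ((k:ℝ) - 1 + (2*(d:ℝ)+2)/(W:ℝ)) := by
      unfold MMS
      rw [hdiv, hmod]
      have hnW : (n:ℝ) - (2*(d:ℝ)+1) = (W:ℝ) := by
        have hnw : n = W + (2*d+1) := by omega
        rw [hnw]; push_cast; ring
      push_cast
      rw [show (n:ℝ) - (2*(d:ℝ)+1) = (W:ℝ) from hnW]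
      ring_nf
    rw [hMMS]
    have hDpos : (0:ℝ) < (k:ℝ) - 1 + (2*(d:ℝ)+2)/(W:ℝ) :=
      add_pos_of_pos_of_nonneg hk1R (by positivity)
    rw [div_le_div_iff₀ hk1R hDpos]
    have hCR : (n.choose (2*d+1) : ℝ)
        = (aF n d u : ℝ) + 2 * ((∑ ℓ ∈ Finset.range (u+1), ee n d ℓ : ℕ) : ℝ) := by
      exact_mod_cast congrArg (Nat.cast : ℕ → ℝ) hC
    have hkey : (aF n d u : ℝ) * ((2*(d:ℝ)+2)/(W:ℝ)) ≤
        2 * ((∑ ℓ ∈ Finset.range (u+1), ee n d ℓ : ℕ) : ℝ) * ((k:ℝ) - 1) := by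
      rw [mul_div_assoc']
      rw [div_le_iff₀ hWpos]
      have hm' : (aF n d u : ℝ) * (2*(d:ℝ)+2) ≤
          2 * ((∑ ℓ ∈ Finset.range (u+1), ee n d ℓ : ℕ) : ℝ) * (((k-1:ℕ):ℝ) * (W:ℝ)) := by
        rw [hW]
        exact_mod_cast hmain
      rw [hkcast] at hm'
      calc (aF n d u : ℝ) * (2*(d:ℝ)+2) ≤
            2 * ((∑ ℓ ∈ Finset.range (u+1), ee n d ℓ : ℕ) : ℝ) * (((k:ℝ)-1) * (W:ℝ)) := hm'
        _ = 2 * ((∑ ℓ ∈ Finset.range (u+1), ee n d ℓ : ℕ) : ℝ) * ((k:ℝ)-1) * (W:ℝ) := by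
            ring
    rw [hCR]
    calc (aF n d u : ℝ) * ((k:ℝ) - 1 + (2*(d:ℝ)+2)/(W:ℝ))
        = (aF n d u : ℝ) * ((k:ℝ)-1) + (aF n d u : ℝ) * ((2*(d:ℝ)+2)/(W:ℝ)) := by ring
      _ ≤ (aF n d u : ℝ) * ((k:ℝ)-1)
            + 2 * ((∑ ℓ ∈ Finset.range (u+1), ee n d ℓ : ℕ) : ℝ) * ((k:ℝ) - 1) :=
          add_le_add_right hkey _
      _ = ((aF n d u : ℝ) + 2 * ((∑ ℓ ∈ Finset.range (u+1), ee n d ℓ : ℕ) : ℝ))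
            * ((k:ℝ)-1) := by ring
end
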